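/- Assume that for every w ∈ (0,∞) the restriction of φ to the interval [0,1/w] is strongly convex. Then for every t ∈ [0,1]^m with t ≠ 0, the function s ↦ D_φ(s∣t) is strongly convex on the convex set {s ∈ [0,1]^m : supp(s) ⊆ supp(t)} (on which it is real-valued). In particular, if t ∈ (0,1]^m, then D_φ(·∣t) is strongly convex on [0,1]^m with parameter min_{1≤i≤m} κ_φ(t_i)/t_i, where κ_φ(w) denotes a strong-convexity parameter of the restriction of φ to [0,1/w]. -/

import Mathlib

open Filter Topology

/-- The extended-real-valued integrand `f(v,w)` of a `φ`-divergence: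
`f(v,w) = w·φ(v/w)` if `w > 0`, `f(v,0) = v·L` if `v > 0`, and `f(0,0) = 0`,
where `L = lim_{x→∞} φ(x)/x ∈ ℝ ∪ {∞}`. -/
noncomputable def phiF (φ : ℝ → ℝ) (L : EReal) (v w : ℝ) : EReal :=
  if 0 < w then ((w * φ (v / w) : ℝ) : EReal)
  else if 0 < v then (v : EReal) * L
  else 0

/-- The `φ`-divergence `D_φ(s∣t) = Σ_{i=1}^m f(s_i, t_i)` of `s` relative to `t`,
here on Euclidean space (so that strong convexity refers to the Euclidean norm). -/
noncomputable def DphiE (φ : ℝ → ℝ) (L : EReal) {m : ℕ}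
    (s t : EuclideanSpace ℝ (Fin m)) : EReal :=
  ∑ i, phiF φ L (s i) (t i)

lemma ereal_coe_sum {α : Type*} (s : Finset α) (g : α → ℝ) :
    ((∑ i ∈ s, g i : ℝ) : EReal) = ∑ i ∈ s, ((g i : ℝ) : EReal) := by
  induction s using Finset.cons_induction with
  | empty => simp
  | cons a s ha ih => rw [Finset.sum_cons, Finset.sum_cons, EReal.coe_add, ih]

lemma coord_key (φ : ℝ → ℝ) (κ : ℝ → ℝ)
    (hκ : ∀ w : ℝ, 0 < w → 0 < κ w ∧ StrongConvexOn (Set.Icc (0 : ℝ) (1 / w)) (κ w) φ)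
    {w c : ℝ} (hw : 0 < w) (hc : c ≤ κ w / w)
    {x y a b : ℝ} (hx : x ∈ Set.Icc (0:ℝ) 1) (hy : y ∈ Set.Icc (0:ℝ) 1)
    (ha : 0 ≤ a) (hb : 0 ≤ b) (hab : a + b = 1) :
    w * φ ((a * x + b * y) / w) ≤ a * (w * φ (x / w)) + b * (w * φ (y / w))
      - a * b * (c / 2 * (x - y) ^ 2) := by
  obtain ⟨hκpos, hsc⟩ := hκ w hw
  have hxw : x / w ∈ Set.Icc (0:ℝ) (1 / w) :=
    ⟨div_nonneg hx.1 hw.le, by gcongr; exact hx.2⟩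
  have hyw : y / w ∈ Set.Icc (0:ℝ) (1 / w) :=
    ⟨div_nonneg hy.1 hw.le, by gcongr; exact hy.2⟩
  have key := hsc.2 hxw hyw ha hb hab
  simp only [smul_eq_mul, Real.norm_eq_abs, sq_abs] at key
  have hcomb : a * (x / w) + b * (y / w) = (a * x + b * y) / w := by ring
  rw [hcomb] at key
  have hsub : x / w - y / w = (x - y) / w := by ring
  rw [hsub] at key
  have h1 : w * φ ((a * x + b * y) / w) ≤
      w * (a * φ (x / w) + b * φ (y / w) - a * b * (κ w / 2 * ((x - y) / w) ^ 2)) :=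
    mul_le_mul_of_nonneg_left key hw.le
  have h2 : w * (a * φ (x / w) + b * φ (y / w) - a * b * (κ w / 2 * ((x - y) / w) ^ 2))
      = a * (w * φ (x / w)) + b * (w * φ (y / w))
        - a * b * ((κ w / w) / 2 * (x - y) ^ 2) := by
    field_simp
  rw [h2] at h1
  have h3 : c / 2 * (x - y) ^ 2 ≤ (κ w / w) / 2 * (x - y) ^ 2 :=
    mul_le_mul_of_nonneg_right (by linarith) (sq_nonneg _)
  have h4 : a * b * (c / 2 * (x - y) ^ 2) ≤ a * b * ((κ w / w) / 2 * (x - y) ^ 2) :=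
    mul_le_mul_of_nonneg_left h3 (mul_nonneg ha hb)
  linarith

lemma main_sc {m : ℕ} (φ : ℝ → ℝ) (L : EReal) (κ : ℝ → ℝ)
    (hκ : ∀ w : ℝ, 0 < w → 0 < κ w ∧ StrongConvexOn (Set.Icc (0 : ℝ) (1 / w)) (κ w) φ)
    (t : EuclideanSpace ℝ (Fin m)) (ht : ∀ i, t i ∈ Set.Icc (0:ℝ) 1)
    (c : ℝ) (hc : ∀ i, 0 < t i → c ≤ κ (t i) / t i) :
    StrongConvexOn {s : EuclideanSpace ℝ (Fin m) | (∀ i, s i ∈ Set.Icc (0 : ℝ) 1) ∧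
      ∀ i, 0 < s i → 0 < t i} c (fun s => (DphiE φ L s t).toReal) := by
  set S : Set (EuclideanSpace ℝ (Fin m)) :=
    {s | (∀ i, s i ∈ Set.Icc (0 : ℝ) 1) ∧ ∀ i, 0 < s i → 0 < t i} with hS
  set g : Fin m → ℝ → ℝ := fun i v => if 0 < t i then t i * φ (v / t i) else 0 with hg
  -- coordinates outside the support vanish
  have hzero : ∀ s ∈ S, ∀ i, ¬ 0 < t i → s i = 0 := by
    intro s hs i hti
    exact le_antisymm (not_lt.mp fun h => hti (hs.2 i h)) (hs.1 i).1
  -- formula for the toReal of the divergence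
  have hformula : ∀ s ∈ S, (DphiE φ L s t).toReal = ∑ i, g i (s i) := by
    intro s hs
    have : DphiE φ L s t = ((∑ i, g i (s i) : ℝ) : EReal) := by
      rw [DphiE, ereal_coe_sum]
      refine Finset.sum_congr rfl fun i _ => ?_
      by_cases hti : 0 < t i
      · simp [phiF, hg, hti]
      · have hsi : s i = 0 := hzero s hs i hti
        simp [phiF, hg, hti, hsi]
    rw [this, EReal.toReal_coe]
  -- convexity of the set
  have hconvS : Convex ℝ S := by
    intro x hx y hy a b ha hb hab
    have happ : ∀ i, (a • x + b • y : EuclideanSpace ℝ (Fin m)) i = a * x i + b * y i := by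
      intro i
      simp [PiLp.add_apply, PiLp.smul_apply, smul_eq_mul]
    constructor
    · intro i
      rw [happ i]
      exact (convex_Icc (0:ℝ) 1) (hx.1 i) (hy.1 i) ha hb hab
    · intro i hpos
      by_contra hti
      have hxi : x i = 0 := hzero x hx i hti
      have hyi : y i = 0 := hzero y hy i hti
      rw [happ i, hxi, hyi] at hpos
      simp at hpos
  refine ⟨hconvS, ?_⟩
  intro x hx y hy a b ha hb hab
  have hxy : a • x + b • y ∈ S := hconvS hx hy ha hb hab
  have happ : ∀ i, (a • x + b • y : EuclideanSpace ℝ (Fin m)) i = a * x i + b * y i := by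
    intro i
    simp [PiLp.add_apply, PiLp.smul_apply, smul_eq_mul]
  have hnorm : ‖x - y‖ ^ 2 = ∑ i, (x i - y i) ^ 2 := by
    rw [PiLp.norm_sq_eq_of_L2]
    refine Finset.sum_congr rfl fun i _ => ?_
    simp [PiLp.sub_apply, Real.norm_eq_abs, sq_abs]
  simp only [smul_eq_mul]
  rw [hformula x hx, hformula y hy, hformula _ hxy]
  calc ∑ i, g i ((a • x + b • y : EuclideanSpace ℝ (Fin m)) i)
      ≤ ∑ i, (a * g i (x i) + b * g i (y i) - a * b * (c / 2 * (x i - y i) ^ 2)) := by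
        refine Finset.sum_le_sum fun i _ => ?_
        rw [happ i]
        by_cases hti : 0 < t i
        · simp only [hg, if_pos hti]
          exact coord_key φ κ hκ hti (hc i hti) (hx.1 i) (hy.1 i) ha hb hab
        · have hxi : x i = 0 := hzero x hx i hti
          have hyi : y i = 0 := hzero y hy i hti
          simp [hg, hti, hxi, hyi]
    _ = a * ∑ i, g i (x i) + b * ∑ i, g i (y i)
          - a * b * (c / 2 * ‖x - y‖ ^ 2) := by
        rw [hnorm, Finset.sum_sub_distrib, Finset.sum_add_distrib,
          ← Finset.mul_sum, ← Finset.mul_sum, ← Finset.mul_sum, ← Finset.mul_sum]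

/-- if for every `w > 0` the restriction of `φ` to `[0, 1/w]` is
strongly convex (with parameter `κ_φ(w) > 0`), then for every `t ∈ [0,1]^m`, `t ≠ 0`,
`D_φ(·∣t)` is strongly convex on `{s ∈ [0,1]^m : supp(s) ⊆ supp(t)}`; and in
particular, for `t ∈ (0,1]^m`, `D_φ(·∣t)` is strongly convex on `[0,1]^m` with
parameter `min_{1 ≤ i ≤ m} κ_φ(t_i)/t_i`. -/
theorem statement6 (m : ℕ) (hm : 1 ≤ m) (φ : ℝ → ℝ) (L : EReal)
    (hφconv : ConvexOn ℝ (Set.Ici 0) φ)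
    (hφ0 : ContinuousWithinAt φ (Set.Ici 0) 0)
    (hL : Tendsto (fun x : ℝ => ((φ x / x : ℝ) : EReal)) atTop (𝓝 L))
    (κ : ℝ → ℝ)
    (hκ : ∀ w : ℝ, 0 < w → 0 < κ w ∧ StrongConvexOn (Set.Icc (0 : ℝ) (1 / w)) (κ w) φ) :
    (∀ t : EuclideanSpace ℝ (Fin m), (∀ i, t i ∈ Set.Icc (0 : ℝ) 1) → t ≠ 0 →
      ∃ c > 0, StrongConvexOn
        {s : EuclideanSpace ℝ (Fin m) | (∀ i, s i ∈ Set.Icc (0 : ℝ) 1) ∧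
          ∀ i, 0 < s i → 0 < t i} c
        (fun s => (DphiE φ L s t).toReal)) ∧
    (∀ t : EuclideanSpace ℝ (Fin m), (∀ i, t i ∈ Set.Ioc (0 : ℝ) 1) →
      StrongConvexOn {s : EuclideanSpace ℝ (Fin m) | ∀ i, s i ∈ Set.Icc (0 : ℝ) 1}
        (Finset.univ.inf' (Finset.univ_nonempty_iff.mpr ⟨⟨0, hm⟩⟩)
          (fun i : Fin m => κ (t i) / t i))
        (fun s => (DphiE φ L s t).toReal)) := by
  constructor
  · intro t ht ht0
    have hex : ∃ i, 0 < t i := by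
      by_contra h
      push_neg at h
      apply ht0
      ext i
      exact le_antisymm (h i) (ht i).1
    obtain ⟨i₀, hi₀⟩ := hex
    have hne : (Finset.univ.filter (fun i => 0 < t i)).Nonempty :=
      ⟨i₀, by simp [hi₀]⟩
    refine ⟨(Finset.univ.filter (fun i => 0 < t i)).inf' hne (fun i => κ (t i) / t i),
      ?_, ?_⟩
    · rw [gt_iff_lt, Finset.lt_inf'_iff]
      intro i hi
      rw [Finset.mem_filter] at hi
      exact div_pos (hκ _ hi.2).1 hi.2
    · exact main_sc φ L κ hκ t ht _ fun i hi =>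
        Finset.inf'_le _ (by simp [hi])
  · intro t ht
    have hset : {s : EuclideanSpace ℝ (Fin m) | ∀ i, s i ∈ Set.Icc (0 : ℝ) 1}
        = {s : EuclideanSpace ℝ (Fin m) | (∀ i, s i ∈ Set.Icc (0 : ℝ) 1) ∧
            ∀ i, 0 < s i → 0 < t i} := by
      ext s
      simp only [Set.mem_setOf_eq]
      exact ⟨fun h => ⟨h, fun i _ => (ht i).1⟩, fun h => h.1⟩
    rw [hset]
    exact main_sc φ L κ hκ t (fun i => ⟨(ht i).1.le, (ht i).2⟩) _
      fun i _ => Finset.inf'_le _ (Finset.mem_univ i)
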